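/- Let Ω be a Polish space, and let π_k (k = 1,2,…) and π be Borel probability measures on Ω² all having the same first marginal. If π_k converges weakly to π, then for every Borel set G ⊂ Ω, the restricted measures π_k⌊_{G×Ω} converge weakly to π⌊_{G×Ω}. -/

import Mathlib

open MeasureTheory Set Filter Topology

noncomputable section

/-- Let `Ω` be Polish and `π_k, π` Borel probability measures on `Ω²` all
with the same first marginal.  If `π_k → π` weakly, then for every Borel set `G ⊆ Ω` the
restrictions `π_k⌊(G × Ω)` converge weakly to `π⌊(G × Ω)`. -/
theorem restriction_weak_convergence {Ω : Type*}
    [MeasurableSpace Ω] [TopologicalSpace Ω] [PolishSpace Ω] [BorelSpace Ω]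
    (πk : ℕ → Measure (Ω × Ω)) (π : Measure (Ω × Ω))
    [∀ k, IsProbabilityMeasure (πk k)] [IsProbabilityMeasure π]
    (hmarg : ∀ k, (πk k).map Prod.fst = π.map Prod.fst)
    (hconv : ∀ f : BoundedContinuousFunction (Ω × Ω) ℝ,
      Tendsto (fun k => ∫ p, f p ∂(πk k)) atTop (𝓝 (∫ p, f p ∂π))) :
    ∀ G : Set Ω, MeasurableSet G →
      ∀ f : BoundedContinuousFunction (Ω × Ω) ℝ,
        Tendsto (fun k => ∫ p, f p ∂((πk k).restrict (G ×ˢ (univ : Set Ω)))) atTop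
          (𝓝 (∫ p, f p ∂(π.restrict (G ×ˢ (univ : Set Ω))))) := by
  intro G hG f
  letI := TopologicalSpace.upgradeIsCompletelyMetrizable Ω
  set μ : Measure Ω := π.map Prod.fst with hμdef
  haveI hμprob : IsProbabilityMeasure μ :=
    Measure.isProbabilityMeasure_map measurable_fst.aemeasurable
  rw [Metric.tendsto_atTop]
  intro ε hε
  -- choose the approximation scale
  set δr : ℝ := ε / (8 * (‖f‖ + 1)) with hδrdef
  have hfnorm : (0:ℝ) ≤ ‖f‖ := norm_nonneg f
  have hδrpos : 0 < δr := by
    apply div_pos hε; positivity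
  set δ : ENNReal := ENNReal.ofReal δr with hδdef
  have hδ0 : δ ≠ 0 := by
    simp [hδdef, ENNReal.ofReal_eq_zero, not_le, hδrpos]
  -- regularity: closed F ⊆ G ⊆ U open with μ (U \ F) < 2δ
  haveI : μ.WeaklyRegular := inferInstance
  obtain ⟨U, hGU, hUopen, -, hUG⟩ :=
    hG.exists_isOpen_diff_lt (μ := μ) (measure_ne_top μ G) hδ0
  obtain ⟨F, hFG, hFclosed, hGF⟩ :=
    hG.exists_isClosed_diff_lt (μ := μ) (measure_ne_top μ G) hδ0
  have hUF : μ (U \ F) < δ + δ := by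
    calc μ (U \ F) ≤ μ ((U \ G) ∪ (G \ F)) := by
          apply measure_mono
          intro x hx
          by_cases hxG : x ∈ G
          · exact Or.inr ⟨hxG, hx.2⟩
          · exact Or.inl ⟨hx.1, hxG⟩
      _ ≤ μ (U \ G) + μ (G \ F) := measure_union_le _ _
      _ < δ + δ := ENNReal.add_lt_add hUG hGF
  -- Urysohn function
  obtain ⟨g, hg0, hg1, hg01⟩ :=
    exists_continuous_zero_one_of_isClosed (X := Ω)
      (isClosed_compl_iff.2 hUopen) hFclosed
      (by rw [disjoint_compl_left_iff_subset]; exact hFG.trans hGU)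
  -- bundle g as bounded continuous and form h p = f p * g p.1
  set gB : BoundedContinuousFunction Ω ℝ :=
    BoundedContinuousFunction.mkOfBound g 1
      (fun a b => Real.dist_le_of_mem_Icc (hg01 a) (hg01 b) |>.trans (by norm_num))
    with hgBdef
  set h : BoundedContinuousFunction (Ω × Ω) ℝ :=
    f * (gB.compContinuous ⟨Prod.fst, continuous_fst⟩) with hhdef
  have hh_apply : ∀ p : Ω × Ω, h p = f p * g p.1 := fun p => rfl
  -- measurability facts
  have hSmeas : MeasurableSet (U \ F) :=
    hUopen.measurableSet.diff hFclosed.measurableSet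
  have hGprod : MeasurableSet (G ×ˢ (univ : Set Ω)) :=
    hG.prod MeasurableSet.univ
  -- pointwise bound
  have hpt : ∀ p : Ω × Ω,
      |(G ×ˢ (univ : Set Ω)).indicator (fun q => f q) p - h p|
        ≤ ((U \ F) ×ˢ (univ : Set Ω)).indicator (fun _ => ‖f‖) p := by
    intro p
    have hfp : |f p| ≤ ‖f‖ := by
      have := f.norm_coe_le_norm p
      simpa [Real.norm_eq_abs] using this
    have hgmem := hg01 p.1
    by_cases hpF : p.1 ∈ F
    · have hgv : g p.1 = 1 := hg1 hpF
      have hpG : p ∈ G ×ˢ (univ : Set Ω) := ⟨hFG hpF, mem_univ _⟩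
      rw [indicator_of_mem hpG, hh_apply, hgv, mul_one, sub_self, abs_zero]
      exact indicator_nonneg (fun _ _ => hfnorm) _
    · by_cases hpU : p.1 ∈ U
      · have hpS : p ∈ (U \ F) ×ˢ (univ : Set Ω) := ⟨⟨hpU, hpF⟩, mem_univ _⟩
        rw [indicator_of_mem hpS]
        by_cases hpG : p.1 ∈ G
        · have hmem : p ∈ G ×ˢ (univ : Set Ω) := ⟨hpG, mem_univ _⟩
          rw [indicator_of_mem hmem, hh_apply]
          have : f p - f p * g p.1 = f p * (1 - g p.1) := by ring
          rw [this, abs_mul]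
          have h1 : |1 - g p.1| ≤ 1 := by
            rw [abs_le]; constructor <;> [linarith [hgmem.2]; linarith [hgmem.1]]
          calc |f p| * |1 - g p.1| ≤ ‖f‖ * 1 :=
                mul_le_mul hfp h1 (abs_nonneg _) hfnorm
            _ = ‖f‖ := mul_one _
        · have hmem : p ∉ G ×ˢ (univ : Set Ω) := by
            simp only [mem_prod, not_and_or]; exact Or.inl hpG
          rw [indicator_of_notMem hmem, hh_apply]
          rw [zero_sub, abs_neg, abs_mul]
          have h1 : |g p.1| ≤ 1 := by
            rw [abs_le]; constructor <;> [linarith [hgmem.1]; exact hgmem.2]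
          calc |f p| * |g p.1| ≤ ‖f‖ * 1 :=
                mul_le_mul hfp h1 (abs_nonneg _) hfnorm
            _ = ‖f‖ := mul_one _
      · have hgv : g p.1 = 0 := hg0 hpU
        have hpG : p ∉ G ×ˢ (univ : Set Ω) := by
          simp only [mem_prod, not_and_or]; exact Or.inl (fun hc => hpU (hGU hc))
        rw [indicator_of_notMem hpG, hh_apply, hgv, mul_zero, sub_self, abs_zero]
        exact indicator_nonneg (fun _ _ => hfnorm) _
  -- key estimate
  have key : ∀ ν : Measure (Ω × Ω), IsProbabilityMeasure ν → ν.map Prod.fst = μ →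
      |(∫ p, f p ∂(ν.restrict (G ×ˢ (univ : Set Ω)))) - ∫ p, h p ∂ν|
        ≤ ‖f‖ * (μ (U \ F)).toReal := by
    intro ν hνprob hνmarg
    haveI := hνprob
    have hfint : Integrable (fun p => f p) ν := f.integrable ν
    have hhint : Integrable (fun p => h p) ν := h.integrable ν
    have hindint : Integrable ((G ×ˢ (univ : Set Ω)).indicator (fun q => f q)) ν :=
      hfint.indicator hGprod
    have hψint : Integrable (((U \ F) ×ˢ (univ : Set Ω)).indicator
        (fun _ : Ω × Ω => ‖f‖)) ν :=
      (integrable_const _).indicator (hSmeas.prod MeasurableSet.univ)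
    rw [← integral_indicator hGprod, ← integral_sub hindint hhint]
    calc |∫ p, ((G ×ˢ (univ : Set Ω)).indicator (fun q => f q) p - h p) ∂ν|
        ≤ ∫ p, |(G ×ˢ (univ : Set Ω)).indicator (fun q => f q) p - h p| ∂ν := by
          simpa [Real.norm_eq_abs] using
            norm_integral_le_integral_norm
              (fun p => (G ×ˢ (univ : Set Ω)).indicator (fun q => f q) p - h p) (μ := ν)
      _ ≤ ∫ p, ((U \ F) ×ˢ (univ : Set Ω)).indicator (fun _ => ‖f‖) p ∂ν := by
          apply integral_mono_of_nonneg
          · exact Eventually.of_forall fun p => abs_nonneg _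
          · exact hψint
          · exact Eventually.of_forall hpt
      _ = (ν ((U \ F) ×ˢ (univ : Set Ω))).toReal • ‖f‖ :=
          integral_indicator_const _ (hSmeas.prod MeasurableSet.univ)
      _ = ‖f‖ * (μ (U \ F)).toReal := by
          rw [prod_univ, ← Measure.map_apply measurable_fst hSmeas, hνmarg]
          rw [smul_eq_mul, mul_comm]
  -- the bound on μ (U \ F)
  have hbound : ‖f‖ * (μ (U \ F)).toReal ≤ ε / 4 := by
    have h1 : (μ (U \ F)).toReal ≤ 2 * δr := by
      have := hUF.le
      have h2 : (μ (U \ F)).toReal ≤ (δ + δ).toReal := by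
        apply ENNReal.toReal_mono _ this
        simp [hδdef]
      calc (μ (U \ F)).toReal ≤ (δ + δ).toReal := h2
        _ = 2 * δr := by
            rw [hδdef, ← ENNReal.ofReal_add hδrpos.le hδrpos.le,
              ENNReal.toReal_ofReal (by linarith)]
            ring
    calc ‖f‖ * (μ (U \ F)).toReal ≤ ‖f‖ * (2 * δr) := by
          apply mul_le_mul_of_nonneg_left h1 hfnorm
      _ ≤ (‖f‖ + 1) * (2 * δr) := by nlinarith
      _ = ε / 4 := by
          rw [hδrdef]; field_simp; ring
  -- convergence of the smoothed integrals
  have hconvh := hconv h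
  rw [Metric.tendsto_atTop] at hconvh
  obtain ⟨N, hN⟩ := hconvh (ε / 4) (by linarith)
  refine ⟨N, fun k hk => ?_⟩
  have hk1 := key (πk k) inferInstance (by rw [hmarg k])
  have hk2 := key π inferInstance rfl
  have hk3 := hN k hk
  rw [Real.dist_eq] at hk3 ⊢
  set A := ∫ p, f p ∂((πk k).restrict (G ×ˢ (univ : Set Ω))) with hA
  set B := ∫ p, h p ∂(πk k) with hB
  set C := ∫ p, h p ∂π with hC
  set D := ∫ p, f p ∂(π.restrict (G ×ˢ (univ : Set Ω))) with hD
  have hDC : |D - C| ≤ ‖f‖ * (μ (U \ F)).toReal := hk2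
  have hCD : |C - D| ≤ ‖f‖ * (μ (U \ F)).toReal := by rw [abs_sub_comm]; exact hDC
  calc |A - D| ≤ |A - B| + |B - D| := abs_sub_le _ _ _
    _ ≤ |A - B| + (|B - C| + |C - D|) := by linarith [abs_sub_le B C D]
    _ < ε / 4 + (ε / 4 + ε / 4) := by
        have := hbound
        linarith [hk1, hk3, hCD]
    _ < ε := by linarith
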